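/- Crandall–Liggett theorem: Let X be a Banach space, ω ∈ ℝ, and let A ⊆ X × X be ω-m-dissipative. Then for every x ∈ X and every t ≥ 0 the limit T(t)x := lim_{n→∞} (J_{t/n}^A)^n x exists in X (the iterated resolvents being defined for all n with tω/n < 1), and the resulting family (T(t))_{t≥0} is a strongly continuous semigroup of type ω on X, i.e. T(0) = I, T(t)T(s)x = T(t+s)x for all t,s ≥ 0 and x ∈ X, ‖T(t)x − T(t)y‖ ≤ e^{ωt}‖x − y‖ for all x,y ∈ X, and for each x ∈ X the map t ↦ T(t)x is continuous on [0,∞). -/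

import Mathlib

open Filter Set

/-- A (possibly multivalued) operator `A ⊆ X × X` is dissipative if
`‖x₁ - x₂‖ ≤ ‖x₁ - x₂ - α (y₁ - y₂)‖` for all `α > 0` and `(x₁,y₁), (x₂,y₂) ∈ A`. -/
def IsDissipativeSet {X : Type*} [NormedAddCommGroup X] [NormedSpace ℝ X]
    (A : Set (X × X)) : Prop :=
  ∀ α : ℝ, 0 < α → ∀ a ∈ A, ∀ b ∈ A,
    ‖a.1 - b.1‖ ≤ ‖a.1 - b.1 - α • (a.2 - b.2)‖

/-- `A` is m-dissipative: dissipative, densely defined, and `ran (I - αA) = X`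
for every `α > 0`. -/
def IsMDissipativeSet {X : Type*} [NormedAddCommGroup X] [NormedSpace ℝ X]
    (A : Set (X × X)) : Prop :=
  IsDissipativeSet A ∧ Dense {x : X | ∃ y, (x, y) ∈ A} ∧
    ∀ α : ℝ, 0 < α → ∀ w : X, ∃ a ∈ A, w = a.1 - α • a.2

/-- The shifted operator `A - ωI = {(x, y - ωx) : (x,y) ∈ A}`; `A` is
`ω`-m-dissipative iff `opShift A ω` is m-dissipative. -/
def opShift {X : Type*} [AddCommGroup X] [Module ℝ X]
    (A : Set (X × X)) (ω : ℝ) : Set (X × X) :=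
  {q | ∃ a ∈ A, q = (a.1, a.2 - ω • a.1)}

section CL
variable {X : Type*} [NormedAddCommGroup X] [NormedSpace ℝ X]

open Classical in
noncomputable def clRes (A : Set (X × X)) (α : ℝ) (w : X) : X :=
  if h : ∃ p, p ∈ A ∧ p.1 - α • p.2 = w then h.choose.1 else w

open Classical in
lemma clRes_spec {A : Set (X × X)} {α : ℝ} {w : X}
    (h : ∃ p, p ∈ A ∧ p.1 - α • p.2 = w) :
    ∃ v, (clRes A α w, v) ∈ A ∧ clRes A α w - α • v = w := by
  rw [clRes, dif_pos h]
  exact ⟨h.choose.2, by simpa using h.choose_spec.1, h.choose_spec.2⟩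

open Classical in
lemma clRes_zero (A : Set (X × X)) (w : X) : clRes A 0 w = w := by
  rw [clRes]
  split
  · next h => simpa using h.choose_spec.2
  · rfl

variable {ω : ℝ} {A : Set (X × X)}

/-- contraction estimate derived from dissipativity of the shift -/
lemma shift_contr (hd : IsDissipativeSet (opShift A ω)) :
    ∀ α : ℝ, 0 < α → α * ω < 1 → ∀ p ∈ A, ∀ q ∈ A,
      ‖p.1 - q.1‖ ≤ (1 - α*ω)⁻¹ * ‖(p.1 - α • p.2) - (q.1 - α • q.2)‖ := by
  intro α hα hαω p hp q hq
  have h1 : (0:ℝ) < 1 - α*ω := by linarith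
  have hα' : 0 < α / (1 - α*ω) := div_pos hα h1
  have hmp : (p.1, p.2 - ω • p.1) ∈ opShift A ω := ⟨p, hp, rfl⟩
  have hmq : (q.1, q.2 - ω • q.1) ∈ opShift A ω := ⟨q, hq, rfl⟩
  have := hd (α / (1 - α*ω)) hα' _ hmp _ hmq
  simp only at this
  have hv : p.1 - q.1 - (α / (1 - α*ω)) • ((p.2 - ω • p.1) - (q.2 - ω • q.1))
      = (1 - α*ω)⁻¹ • ((p.1 - α • p.2) - (q.1 - α • q.2)) := by
    match_scalars <;> field_simp <;> ring
  rw [hv, norm_smul, Real.norm_eq_abs, abs_of_pos (inv_pos.2 h1)] at this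
  exact this

/-- surjectivity of I - αA derived from surjectivity of the shift -/
lemma shift_surj (hs : ∀ α : ℝ, 0 < α → ∀ w : X, ∃ a ∈ opShift A ω, w = a.1 - α • a.2) :
    ∀ α : ℝ, 0 < α → α * ω < 1 → ∀ w : X, ∃ p ∈ A, p.1 - α • p.2 = w := by
  intro α hα hαω w
  have h1 : (0:ℝ) < 1 - α*ω := by linarith
  have hα' : 0 < α / (1 - α*ω) := div_pos hα h1
  obtain ⟨a, ha, hw⟩ := hs (α / (1 - α*ω)) hα' ((1 - α*ω)⁻¹ • w)
  obtain ⟨p, hp, rfl⟩ := ha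
  refine ⟨p, hp, ?_⟩
  have : (1 - α*ω)⁻¹ • w = (1 - α*ω)⁻¹ • (p.1 - α • p.2) := by
    rw [hw]; match_scalars <;> field_simp <;> ring
  have h2 := smul_right_injective X (by positivity : (1 - α*ω)⁻¹ ≠ 0) this
  exact h2.symm

end CL

section CL2
open Classical
variable {X : Type*} [NormedAddCommGroup X] [NormedSpace ℝ X]
variable {ω : ℝ} {A : Set (X × X)}

lemma mu_omega_lt {lam mu : ℝ} (hmu : 0 < mu) (hlm : mu ≤ lam) (hl : lam*ω < 1) :
    mu*ω < 1 := by
  rcases le_or_gt ω 0 with h | h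
  · have : mu*ω ≤ 0 := mul_nonpos_of_nonneg_of_nonpos hmu.le h
    linarith
  · calc mu*ω ≤ lam*ω := by nlinarith
    _ < 1 := hl

variable (hc : ∀ α : ℝ, 0 < α → α * ω < 1 → ∀ p ∈ A, ∀ q ∈ A,
      ‖p.1 - q.1‖ ≤ (1 - α*ω)⁻¹ * ‖(p.1 - α • p.2) - (q.1 - α • q.2)‖)
variable (hs2 : ∀ α : ℝ, 0 < α → α * ω < 1 → ∀ w : X, ∃ p ∈ A, p.1 - α • p.2 = w)

include hc in
lemma res_unique {α : ℝ} (hα : 0 < α) (hαω : α*ω < 1) {p : X × X} (hp : p ∈ A)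
    {w : X} (he : p.1 - α • p.2 = w) : clRes A α w = p.1 := by
  have hex : ∃ q, q ∈ A ∧ q.1 - α • q.2 = w := ⟨p, hp, he⟩
  obtain ⟨v, hv, he2⟩ := clRes_spec hex
  have h := hc α hα hαω _ hv _ hp
  simp only at h
  rw [he2, he, sub_self, norm_zero, mul_zero] at h
  exact sub_eq_zero.1 (norm_le_zero_iff.1 h)

include hs2 in
lemma res_ex {α : ℝ} (hα : 0 < α) (hαω : α*ω < 1) (w : X) :
    ∃ v, (clRes A α w, v) ∈ A ∧ clRes A α w - α • v = w := by
  obtain ⟨p, hp, he⟩ := hs2 α hα hαω w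
  exact clRes_spec ⟨p, hp, he⟩

include hc hs2 in
lemma res_lip {α : ℝ} (hα : 0 < α) (hαω : α*ω < 1) (w w' : X) :
    ‖clRes A α w - clRes A α w'‖ ≤ (1 - α*ω)⁻¹ * ‖w - w'‖ := by
  obtain ⟨v, hv, he⟩ := res_ex hs2 hα hαω w
  obtain ⟨v', hv', he'⟩ := res_ex hs2 hα hαω w'
  have h := hc α hα hαω _ hv _ hv'
  simp only at h
  rwa [he, he'] at h

include hc hs2 in
lemma res_iter_lip {α : ℝ} (hα : 0 < α) (hαω : α*ω < 1) (w w' : X) (m : ℕ) :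
    ‖(clRes A α)^[m] w - (clRes A α)^[m] w'‖ ≤ ((1 - α*ω)⁻¹)^m * ‖w - w'‖ := by
  induction m with
  | zero => simp
  | succ m ih =>
    have h1 : (0:ℝ) ≤ (1 - α*ω)⁻¹ := by
      have : (0:ℝ) < 1 - α*ω := by linarith
      positivity
    calc ‖(clRes A α)^[m+1] w - (clRes A α)^[m+1] w'‖
        = ‖clRes A α ((clRes A α)^[m] w) - clRes A α ((clRes A α)^[m] w')‖ := by
          rw [Function.iterate_succ_apply', Function.iterate_succ_apply']
      _ ≤ (1 - α*ω)⁻¹ * ‖(clRes A α)^[m] w - (clRes A α)^[m] w'‖ :=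
          res_lip hc hs2 hα hαω _ _
      _ ≤ (1 - α*ω)⁻¹ * (((1 - α*ω)⁻¹)^m * ‖w - w'‖) := by
          exact mul_le_mul_of_nonneg_left ih h1
      _ = ((1 - α*ω)⁻¹)^(m+1) * ‖w - w'‖ := by ring

include hc in
lemma res_move {α : ℝ} (hα : 0 < α) (hαω : α*ω < 1) (hs2' : ∀ α : ℝ, 0 < α → α * ω < 1 → ∀ w : X, ∃ p ∈ A, p.1 - α • p.2 = w)
    {x y : X} (hxy : (x, y) ∈ A) :
    ‖clRes A α x - x‖ ≤ (1 - α*ω)⁻¹ * (α * ‖y‖) := by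
  have h0 : clRes A α (x - α • y) = x := res_unique hc hα hαω hxy rfl
  calc ‖clRes A α x - x‖ = ‖clRes A α x - clRes A α (x - α • y)‖ := by rw [h0]
    _ ≤ (1 - α*ω)⁻¹ * ‖x - (x - α • y)‖ := res_lip hc hs2' hα hαω _ _
    _ = (1 - α*ω)⁻¹ * (α * ‖y‖) := by
        rw [sub_sub_cancel, norm_smul, Real.norm_eq_abs, abs_of_pos hα]

include hc hs2 in
lemma res_iter_move {α : ℝ} (hα : 0 < α) (hαω : α*ω < 1)
    {x y : X} (hxy : (x, y) ∈ A) (m : ℕ) :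
    ‖(clRes A α)^[m] x - x‖ ≤ m * α * (max (1 - α*ω)⁻¹ 1)^m * ‖y‖ := by
  have h1 : (0:ℝ) < 1 - α*ω := by linarith
  have hg : (0:ℝ) ≤ (1 - α*ω)⁻¹ := by positivity
  have hG1 : (1:ℝ) ≤ max (1 - α*ω)⁻¹ 1 := le_max_right _ _
  have hgG : (1 - α*ω)⁻¹ ≤ max (1 - α*ω)⁻¹ 1 := le_max_left _ _
  induction m with
  | zero => simp
  | succ m ih =>
    have hGm : (1:ℝ) ≤ (max (1 - α*ω)⁻¹ 1)^m := one_le_pow₀ hG1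
    calc ‖(clRes A α)^[m+1] x - x‖
        = ‖(clRes A α ((clRes A α)^[m] x) - clRes A α x) + (clRes A α x - x)‖ := by
          rw [Function.iterate_succ_apply']; congr 1; abel
      _ ≤ ‖clRes A α ((clRes A α)^[m] x) - clRes A α x‖ + ‖clRes A α x - x‖ := norm_add_le _ _
      _ ≤ (1 - α*ω)⁻¹ * ‖(clRes A α)^[m] x - x‖ + (1 - α*ω)⁻¹ * (α * ‖y‖) := by
          gcongr
          · exact res_lip hc hs2 hα hαω _ _
          · exact res_move hc hα hαω hs2 hxy
      _ ≤ (max (1 - α*ω)⁻¹ 1) * (m * α * (max (1 - α*ω)⁻¹ 1)^m * ‖y‖)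
            + (max (1 - α*ω)⁻¹ 1)^(m+1) * (α * ‖y‖) := by
          refine add_le_add (mul_le_mul hgG ih (norm_nonneg _) (by linarith)) ?_
          refine mul_le_mul_of_nonneg_right ?_ (by positivity)
          exact hgG.trans (le_self_pow₀ (by linarith) (Nat.succ_ne_zero m))
      _ = (m+1 : ℕ) * α * (max (1 - α*ω)⁻¹ 1)^(m+1) * ‖y‖ := by push_cast; ring

include hc hs2 in
lemma res_id {lam mu : ℝ} (hmu : 0 < mu) (hlm : mu ≤ lam) (hl : lam*ω < 1) (w : X) :
    clRes A lam w = clRes A mu ((mu/lam) • w + (1 - mu/lam) • (clRes A lam w)) := by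
  have hlam : 0 < lam := lt_of_lt_of_le hmu hlm
  have hmuω : mu*ω < 1 := mu_omega_lt hmu hlm hl
  obtain ⟨v, hv, he⟩ := res_ex hs2 hlam hl w
  refine (res_unique hc hmu hmuω hv ?_).symm
  simp only
  set u := clRes A lam w with hu
  rw [← he]
  match_scalars <;> field_simp <;> ring
end CL2

section CL3

lemma concave_sqrt {a b u v : ℝ} (ha : 0 ≤ a) (hb : 0 ≤ b) (hab : a + b = 1)
    (hu : 0 ≤ u) (hv : 0 ≤ v) :
    a * Real.sqrt u + b * Real.sqrt v ≤ Real.sqrt (a*u + b*v) := by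
  have hsu := Real.sq_sqrt hu
  have hsv := Real.sq_sqrt hv
  have h1 := Real.sqrt_nonneg u
  have h2 := Real.sqrt_nonneg v
  have key : (a * Real.sqrt u + b * Real.sqrt v)^2 ≤ a*u + b*v := by
    have expand : a*u + b*v - (a * Real.sqrt u + b * Real.sqrt v)^2
        = a*b*(Real.sqrt u - Real.sqrt v)^2 := by
      linear_combination (-a)*hsu + (-b)*hsv - (a*Real.sqrt u^2 + b*Real.sqrt v^2)*hab
    nlinarith [mul_nonneg (mul_nonneg ha hb) (sq_nonneg (Real.sqrt u - Real.sqrt v))]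
  have hnn : 0 ≤ a * Real.sqrt u + b * Real.sqrt v := by positivity
  calc a * Real.sqrt u + b * Real.sqrt v
      = Real.sqrt ((a * Real.sqrt u + b * Real.sqrt v)^2) := (Real.sqrt_sq hnn).symm
    _ ≤ Real.sqrt (a*u + b*v) := Real.sqrt_le_sqrt key

/-- Abstract Crandall–Liggett double induction. -/
lemma cl_core {r lam mu : ℝ} (hr : 0 ≤ r) (hmu : 0 < mu) (hlm : mu ≤ lam)
    (b : ℕ → ℕ → ℝ)
    (hb0 : ∀ m, b m 0 ≤ m * lam * r) (h0b : ∀ n, b 0 n ≤ n * mu * r)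
    (hrec : ∀ m n, b (m+1) (n+1) ≤ (mu/lam) * b m n + (1 - mu/lam) * b (m+1) n) :
    ∀ n m, b m n ≤ r * Real.sqrt ((m*lam - n*mu)^2 + m*lam^2 + n*mu^2) := by
  have hlam : 0 < lam := lt_of_lt_of_le hmu hlm
  have ha : 0 ≤ mu/lam := by positivity
  have hb' : 0 ≤ 1 - mu/lam := by
    have : mu/lam ≤ 1 := (div_le_one hlam).2 hlm
    linarith
  intro n
  induction n with
  | zero =>
    intro m
    refine (hb0 m).trans ?_
    rw [mul_comm _ r]
    refine mul_le_mul_of_nonneg_left ?_ hr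
    have hml : (0:ℝ) ≤ m * lam := by positivity
    calc (m:ℝ) * lam = Real.sqrt (((m:ℝ)*lam)^2) := (Real.sqrt_sq hml).symm
      _ ≤ Real.sqrt (((m:ℝ)*lam - (0:ℕ)*mu)^2 + m*lam^2 + (0:ℕ)*mu^2) := by
          apply Real.sqrt_le_sqrt
          push_cast
          nlinarith [mul_nonneg (Nat.cast_nonneg (α := ℝ) m) (sq_nonneg lam)]
  | succ n ih =>
    intro m
    match m with
    | 0 =>
      refine (h0b (n+1)).trans ?_
      rw [mul_comm _ r]
      refine mul_le_mul_of_nonneg_left ?_ hr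
      have hml : (0:ℝ) ≤ ((n:ℝ)+1) * mu := by positivity
      push_cast
      calc ((n:ℝ)+1) * mu = Real.sqrt ((((n:ℝ)+1)*mu)^2) := (Real.sqrt_sq hml).symm
        _ ≤ Real.sqrt (((0:ℝ)*lam - ((n:ℝ)+1)*mu)^2 + 0*lam^2 + ((n:ℝ)+1)*mu^2) := by
            apply Real.sqrt_le_sqrt
            nlinarith [mul_nonneg (by positivity : (0:ℝ) ≤ (n:ℝ)+1) (sq_nonneg mu)]
    | m+1 =>
      have hu : (0:ℝ) ≤ ((m:ℝ)*lam - n*mu)^2 + m*lam^2 + n*mu^2 := by positivity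
      have hv : (0:ℝ) ≤ (((m:ℝ)+1)*lam - n*mu)^2 + ((m:ℝ)+1)*lam^2 + n*mu^2 := by positivity
      have t1 := ih m
      have t2 := ih (m+1)
      push_cast at t1 t2 ⊢
      calc b (m+1) (n+1) ≤ (mu/lam) * b m n + (1 - mu/lam) * b (m+1) n := hrec m n
        _ ≤ (mu/lam) * (r * Real.sqrt (((m:ℝ)*lam - n*mu)^2 + m*lam^2 + n*mu^2))
            + (1 - mu/lam) * (r * Real.sqrt ((((m:ℝ)+1)*lam - n*mu)^2 + ((m:ℝ)+1)*lam^2 + n*mu^2)) :=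
            add_le_add (mul_le_mul_of_nonneg_left t1 ha) (mul_le_mul_of_nonneg_left t2 hb')
        _ = r * ((mu/lam) * Real.sqrt (((m:ℝ)*lam - n*mu)^2 + m*lam^2 + n*mu^2)
            + (1 - mu/lam) * Real.sqrt ((((m:ℝ)+1)*lam - n*mu)^2 + ((m:ℝ)+1)*lam^2 + n*mu^2)) := by
            ring
        _ ≤ r * Real.sqrt ((mu/lam) * (((m:ℝ)*lam - n*mu)^2 + m*lam^2 + n*mu^2)
            + (1 - mu/lam) * ((((m:ℝ)+1)*lam - n*mu)^2 + ((m:ℝ)+1)*lam^2 + n*mu^2)) :=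
            mul_le_mul_of_nonneg_left (concave_sqrt ha hb' (by ring) hu hv) hr
        _ ≤ r * Real.sqrt ((((m:ℝ)+1)*lam - ((n:ℝ)+1)*mu)^2 + ((m:ℝ)+1)*lam^2 + ((n:ℝ)+1)*mu^2) := by
            refine mul_le_mul_of_nonneg_left ?_ hr
            apply Real.sqrt_le_sqrt
            have key : (mu/lam) * (((m:ℝ)*lam - n*mu)^2 + m*lam^2 + n*mu^2)
                + (1 - mu/lam) * ((((m:ℝ)+1)*lam - n*mu)^2 + ((m:ℝ)+1)*lam^2 + n*mu^2)
                = ((((m:ℝ)+1)*lam - ((n:ℝ)+1)*mu)^2 + ((m:ℝ)+1)*lam^2 + ((n:ℝ)+1)*mu^2) - 2*mu^2 := by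
              field_simp
              ring
            rw [key]
            nlinarith [sq_nonneg mu]
end CL3

section CL4
variable {X : Type*} [NormedAddCommGroup X] [NormedSpace ℝ X]
variable {ω : ℝ} {A : Set (X × X)}
variable (hc : ∀ α : ℝ, 0 < α → α * ω < 1 → ∀ p ∈ A, ∀ q ∈ A,
      ‖p.1 - q.1‖ ≤ (1 - α*ω)⁻¹ * ‖(p.1 - α • p.2) - (q.1 - α • q.2)‖)
variable (hs2 : ∀ α : ℝ, 0 < α → α * ω < 1 → ∀ w : X, ∃ p ∈ A, p.1 - α • p.2 = w)

include hc hs2 in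
lemma master {x y : X} (hxy : (x, y) ∈ A) {lam mu : ℝ} (hmu : 0 < mu)
    (hlm : mu ≤ lam) (hl : lam*ω < 1) (m n : ℕ) :
    ‖(clRes A lam)^[m] x - (clRes A mu)^[n] x‖
      ≤ (max (1 - lam*ω)⁻¹ 1)^m * (max (1 - mu*ω)⁻¹ 1)^n
        * (‖y‖ * Real.sqrt (((m:ℝ)*lam - n*mu)^2 + m*lam^2 + n*mu^2)) := by
  have hlam : 0 < lam := lt_of_lt_of_le hmu hlm
  have hmuω : mu*ω < 1 := mu_omega_lt hmu hlm hl
  have hc0 : (0:ℝ) < 1 - lam*ω := by linarith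
  have hd0 : (0:ℝ) < 1 - mu*ω := by linarith
  set a : ℕ → ℕ → ℝ := fun m n => ‖(clRes A lam)^[m] x - (clRes A mu)^[n] x‖ with ha
  have hann : ∀ m n, 0 ≤ a m n := fun m n => norm_nonneg _
  have hcoef1 : (0:ℝ) ≤ mu/lam := by positivity
  have hcoef2 : (0:ℝ) ≤ 1 - mu/lam := by
    have : mu/lam ≤ 1 := (div_le_one hlam).2 hlm
    linarith
  have arec : ∀ m n, a (m+1) (n+1)
      ≤ (1 - mu*ω)⁻¹ * ((mu/lam) * a m n + (1 - mu/lam) * a (m+1) n) := by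
    intro m n
    set P := (clRes A lam)^[m] x with hP
    set Q := (clRes A lam)^[m+1] x with hQ
    set R := (clRes A mu)^[n] x with hR
    have hQP : Q = clRes A lam P := by rw [hQ, hP, Function.iterate_succ_apply']
    have hid : Q = clRes A mu ((mu/lam) • P + (1 - mu/lam) • Q) := by
      rw [hQP]; exact res_id hc hs2 hmu hlm hl P
    have step1 : a (m+1) (n+1) = ‖clRes A mu ((mu/lam) • P + (1 - mu/lam) • Q) - clRes A mu R‖ := by
      rw [ha]; simp only [← hP, ← hQ, ← hR]
      rw [Function.iterate_succ_apply', ← hid]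
    rw [step1]
    calc ‖clRes A mu ((mu/lam) • P + (1 - mu/lam) • Q) - clRes A mu R‖
        ≤ (1 - mu*ω)⁻¹ * ‖((mu/lam) • P + (1 - mu/lam) • Q) - R‖ :=
          res_lip hc hs2 hmu hmuω _ _
      _ ≤ (1 - mu*ω)⁻¹ * ((mu/lam) * a m n + (1 - mu/lam) * a (m+1) n) := by
          refine mul_le_mul_of_nonneg_left ?_ (by positivity)
          have hvec : ((mu/lam) • P + (1 - mu/lam) • Q) - R
              = (mu/lam) • (P - R) + (1 - mu/lam) • (Q - R) := by module
          rw [hvec]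
          calc ‖(mu/lam) • (P - R) + (1 - mu/lam) • (Q - R)‖
              ≤ ‖(mu/lam) • (P - R)‖ + ‖(1 - mu/lam) • (Q - R)‖ := norm_add_le _ _
            _ = (mu/lam) * a m n + (1 - mu/lam) * a (m+1) n := by
                rw [norm_smul, norm_smul, Real.norm_eq_abs, Real.norm_eq_abs,
                  abs_of_nonneg hcoef1, abs_of_nonneg hcoef2]
  have ab0 : ∀ m, a m 0 ≤ (m:ℝ) * lam * (max (1 - lam*ω)⁻¹ 1)^m * ‖y‖ := by
    intro m
    simpa [ha] using res_iter_move hc hs2 hlam hl hxy m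
  have a0b : ∀ n, a 0 n ≤ (n:ℝ) * mu * (max (1 - mu*ω)⁻¹ 1)^n * ‖y‖ := by
    intro n
    have := res_iter_move hc hs2 hmu hmuω hxy n
    rw [ha]
    simp only [Function.iterate_zero_apply]
    rw [norm_sub_rev]
    exact this
  rcases le_or_gt ω 0 with hω | hω
  · -- ω ≤ 0 : contraction case
    have hmaxl : max (1 - lam*ω)⁻¹ 1 = 1 := max_eq_right (by
      rw [inv_le_one_iff₀]; right; nlinarith)
    have hmaxm : max (1 - mu*ω)⁻¹ 1 = 1 := max_eq_right (by
      rw [inv_le_one_iff₀]; right; nlinarith)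
    rw [hmaxl, hmaxm, one_pow, one_pow, one_mul, one_mul]
    refine cl_core (norm_nonneg y) hmu hlm a ?_ ?_ ?_ n m
    · intro m; have := ab0 m; rw [hmaxl] at this; simpa using this
    · intro n; have := a0b n; rw [hmaxm] at this; simpa using this
    · intro m n
      refine (arec m n).trans ?_
      have h1 : (1 - mu*ω)⁻¹ ≤ 1 := by rw [inv_le_one_iff₀]; right; nlinarith
      have h2 : (0:ℝ) ≤ (mu/lam) * a m n + (1 - mu/lam) * a (m+1) n := by
        have := hann m n; have := hann (m+1) n; positivity
      nlinarith
  · -- ω > 0 : weighted case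
    have hle1 : 1 - lam*ω ≤ 1 := by nlinarith
    have hle2 : 1 - mu*ω ≤ 1 := by nlinarith
    have hmaxl : max (1 - lam*ω)⁻¹ 1 = (1 - lam*ω)⁻¹ := max_eq_left (by
      rw [le_inv_comm₀ one_pos hc0]; simpa using hle1)
    have hmaxm : max (1 - mu*ω)⁻¹ 1 = (1 - mu*ω)⁻¹ := max_eq_left (by
      rw [le_inv_comm₀ one_pos hd0]; simpa using hle2)
    set c := 1 - lam*ω with hcdef
    set d := 1 - mu*ω with hddef
    set b : ℕ → ℕ → ℝ := fun m n => c^m * d^n * a m n with hb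
    have hcore : ∀ n m, b m n ≤ ‖y‖ * Real.sqrt (((m:ℝ)*lam - n*mu)^2 + m*lam^2 + n*mu^2) := by
      refine cl_core (norm_nonneg y) hmu hlm b ?_ ?_ ?_
      · intro m
        have := ab0 m
        rw [hmaxl] at this
        calc b m 0 = c^m * a m 0 := by rw [hb]; simp
          _ ≤ c^m * ((m:ℝ) * lam * (c⁻¹)^m * ‖y‖) := by
              refine mul_le_mul_of_nonneg_left this (by positivity)
          _ = (m:ℝ) * lam * ‖y‖ * (c^m * (c⁻¹)^m) := by ring
          _ = (m:ℝ) * lam * ‖y‖ := by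
              rw [← mul_pow, mul_inv_cancel₀ (ne_of_gt hc0), one_pow, mul_one]
      · intro n
        have := a0b n
        rw [hmaxm] at this
        calc b 0 n = d^n * a 0 n := by rw [hb]; simp
          _ ≤ d^n * ((n:ℝ) * mu * (d⁻¹)^n * ‖y‖) := by
              refine mul_le_mul_of_nonneg_left this (by positivity)
          _ = (n:ℝ) * mu * ‖y‖ * (d^n * (d⁻¹)^n) := by ring
          _ = (n:ℝ) * mu * ‖y‖ := by
              rw [← mul_pow, mul_inv_cancel₀ (ne_of_gt hd0), one_pow, mul_one]
      · intro m n
        have h1 := arec m n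
        calc b (m+1) (n+1) = c^(m+1) * d^(n+1) * a (m+1) (n+1) := rfl
          _ ≤ c^(m+1) * d^(n+1) * ((1 - mu*ω)⁻¹ * ((mu/lam) * a m n + (1 - mu/lam) * a (m+1) n)) := by
              refine mul_le_mul_of_nonneg_left h1 (by positivity)
          _ = (mu/lam) * c * (c^m * d^n * a m n) + (1 - mu/lam) * (c^(m+1) * d^n * a (m+1) n) := by
              rw [← hddef]
              field_simp
              ring
          _ ≤ (mu/lam) * b m n + (1 - mu/lam) * b (m+1) n := by
              rw [hb]
              simp only
              refine add_le_add ?_ (le_of_eq (by ring))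
              have hbnn : 0 ≤ c^m * d^n * a m n := by
                have := hann m n; positivity
              nlinarith [mul_nonneg (mul_nonneg hcoef1 hbnn) (show (0:ℝ) ≤ 1 - c by linarith)]
    have hfin := hcore n m
    rw [hmaxl, hmaxm]
    have hpos : (0:ℝ) < c^m * d^n := by positivity
    rw [hb] at hfin
    simp only at hfin
    calc a m n = (c^m * d^n * a m n) / (c^m * d^n) := by field_simp
      _ ≤ (‖y‖ * Real.sqrt (((m:ℝ)*lam - n*mu)^2 + m*lam^2 + n*mu^2)) / (c^m * d^n) :=
          div_le_div_of_nonneg_right hfin hpos.le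
      _ = (c⁻¹)^m * (d⁻¹)^n * (‖y‖ * Real.sqrt (((m:ℝ)*lam - n*mu)^2 + m*lam^2 + n*mu^2)) := by
          rw [div_eq_mul_inv, mul_inv, ← inv_pow, ← inv_pow]
          ring
end CL4

section CL5
open Topology
variable {X : Type*} [NormedAddCommGroup X] [NormedSpace ℝ X] [CompleteSpace X]
variable {ω : ℝ} {A : Set (X × X)}

lemma Gexp {α : ℝ} (hα : 0 ≤ α) (hsm : |ω| * α ≤ 1/2) :
    max (1 - α*ω)⁻¹ 1 ≤ Real.exp (2 * |ω| * α) := by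
  have he1 : (1:ℝ) ≤ Real.exp (2 * |ω| * α) := Real.one_le_exp (by positivity)
  refine max_le ?_ he1
  rcases le_or_gt ω 0 with hω | hω
  · have : (1:ℝ) ≤ 1 - α*ω := by nlinarith
    calc (1 - α*ω)⁻¹ ≤ 1 := by rw [inv_le_one_iff₀]; right; exact this
      _ ≤ _ := he1
  · have habs : |ω| = ω := abs_of_pos hω
    set x := α * ω with hx
    have hx0 : 0 ≤ x := by positivity
    have hx2 : x ≤ 1/2 := by rw [hx]; rwa [habs, mul_comm] at hsm
    have h1x : (0:ℝ) < 1 - x := by linarith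
    have hexp := Real.add_one_le_exp (2*x)
    have key : 1 ≤ (1 - x) * Real.exp (2*x) := by nlinarith
    have : (1 - x)⁻¹ ≤ Real.exp (2*x) := by
      rw [inv_le_iff_one_le_mul₀ h1x]
      linarith [key]
    calc (1 - α*ω)⁻¹ = (1-x)⁻¹ := by rw [hx]
      _ ≤ Real.exp (2*x) := this
      _ = Real.exp (2 * |ω| * α) := by rw [habs, hx]; ring_nf

lemma Gpow {α : ℝ} (hα : 0 ≤ α) (hsm : |ω| * α ≤ 1/2) (m : ℕ) :
    (max (1 - α*ω)⁻¹ 1)^m ≤ Real.exp (2 * |ω| * (m * α)) := by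
  calc (max (1 - α*ω)⁻¹ 1)^m ≤ (Real.exp (2 * |ω| * α))^m := by
        refine pow_le_pow_left₀ ?_ (Gexp hα hsm) m
        have : (1:ℝ) ≤ max (1 - α*ω)⁻¹ 1 := le_max_right _ _
        linarith
    _ = Real.exp (2 * |ω| * (m * α)) := by
        rw [← Real.exp_nat_mul]; ring_nf

variable (hc : ∀ α : ℝ, 0 < α → α * ω < 1 → ∀ p ∈ A, ∀ q ∈ A,
      ‖p.1 - q.1‖ ≤ (1 - α*ω)⁻¹ * ‖(p.1 - α • p.2) - (q.1 - α • q.2)‖)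
variable (hs2 : ∀ α : ℝ, 0 < α → α * ω < 1 → ∀ w : X, ∃ p ∈ A, p.1 - α • p.2 = w)

omit [CompleteSpace X] in
lemma seq_const_zero (A : Set (X × X)) (x : X) (n : ℕ) :
    (clRes A ((0:ℝ)/n))^[n] x = x := by
  have : clRes A ((0:ℝ)/n) = id := by
    funext w; rw [zero_div]; exact clRes_zero A w
  rw [this, Function.iterate_id, id_eq]

/-- basic facts about `t/n` for `n` large -/
lemma tn_facts {t : ℝ} (ht : 0 < t) {n : ℕ} (hn : (⌈2 * |ω| * t⌉₊ + 1 : ℕ) ≤ n) :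
    0 < t/n ∧ (t/n)*ω < 1 ∧ |ω| * (t/n) ≤ 1/2 ∧ (n:ℝ) ≠ 0 := by
  have hn0 : 0 < n := lt_of_lt_of_le (Nat.succ_pos _) hn
  have hnR : (0:ℝ) < n := by exact_mod_cast hn0
  have h1 : 2 * |ω| * t < n := by
    calc 2 * |ω| * t ≤ (⌈2 * |ω| * t⌉₊ : ℝ) := Nat.le_ceil _
      _ < (⌈2 * |ω| * t⌉₊ + 1 : ℕ) := by push_cast; linarith
      _ ≤ n := by exact_mod_cast hn
  have habs : |ω| * (t/n) ≤ 1/2 := by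
    have he : |ω| * (t/n) = (|ω| * t)/n := by ring
    rw [he, div_le_iff₀ hnR]
    nlinarith
  refine ⟨div_pos ht hnR, ?_, habs, ne_of_gt hnR⟩
  have h2 : (t/n)*ω ≤ (t/n)*|ω| := mul_le_mul_of_nonneg_left (le_abs_self ω) (by positivity)
  have h3 : (t/n)*|ω| = |ω| * (t/n) := mul_comm _ _
  linarith

include hc hs2 in
lemma conv_mem {x y : X} (hxy : (x, y) ∈ A) {t : ℝ} (ht : 0 ≤ t) :
    ∃ L, Tendsto (fun n : ℕ => (clRes A (t/n))^[n] x) atTop (𝓝 L) := by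
  rcases eq_or_lt_of_le ht with rfl | ht
  · exact ⟨x, by simp only [seq_const_zero]; exact tendsto_const_nhds⟩
  set u : ℕ → X := fun n => (clRes A (t/n))^[n] x with hu
  set n₀ : ℕ := ⌈2 * |ω| * t⌉₊ + 1 with hn₀
  clear_value n₀
  set E : ℝ := Real.exp (2 * |ω| * t) with hE
  have hE0 : 0 < E := Real.exp_pos _
  -- symmetric two-index bound
  have hsym : ∀ i j : ℕ, n₀ ≤ j → j ≤ i → ‖u j - u i‖ ≤ E * E * ‖y‖ * Real.sqrt (t^2/j + t^2/i) := by
    intro i j hj hij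
    rw [hn₀] at hj
    have hi : (⌈2 * |ω| * t⌉₊ + 1 : ℕ) ≤ i := le_trans hj hij
    obtain ⟨hlip, hliw, hlia, hlin⟩ := tn_facts (ω := ω) ht hi
    obtain ⟨hljp, hljw, hlja, hljn⟩ := tn_facts (ω := ω) ht hj
    have hml : t/i ≤ t/j := by
      apply div_le_div_of_nonneg_left ht.le ?_ ?_
      · positivity
      · exact_mod_cast hij
    have hmas := master hc hs2 hxy hlip hml hljw j i
    have hjj : (j:ℝ) * (t/j) = t := by field_simp
    have hii : (i:ℝ) * (t/i) = t := by field_simp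
    have hjj2 : (j:ℝ) * (t/j)^2 = t^2/j := by field_simp
    have hii2 : (i:ℝ) * (t/i)^2 = t^2/i := by field_simp
    rw [hjj, hii, hjj2, hii2, sub_self] at hmas
    have hG1 : (max (1 - (t/j)*ω)⁻¹ 1)^j ≤ E := by
      have := Gpow (ω := ω) hljp.le hlja j
      rwa [hjj] at this
    have hG2 : (max (1 - (t/i)*ω)⁻¹ 1)^i ≤ E := by
      have := Gpow (ω := ω) hlip.le hlia i
      rwa [hii] at this
    calc ‖u j - u i‖ ≤ (max (1 - (t/j)*ω)⁻¹ 1)^j * (max (1 - (t/i)*ω)⁻¹ 1)^i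
          * (‖y‖ * Real.sqrt ((0:ℝ)^2 + t^2/j + t^2/i)) := hmas
      _ ≤ E * E * (‖y‖ * Real.sqrt ((0:ℝ)^2 + t^2/j + t^2/i)) := by
          have hnn : (0:ℝ) ≤ ‖y‖ * Real.sqrt ((0:ℝ)^2 + t^2/j + t^2/i) := by positivity
          have h1 : (0:ℝ) ≤ (max (1 - (t/j)*ω)⁻¹ 1)^j := by positivity
          have h2 : (0:ℝ) ≤ (max (1 - (t/i)*ω)⁻¹ 1)^i := by positivity
          exact mul_le_mul (mul_le_mul hG1 hG2 h2 hE0.le) le_rfl hnn (by positivity)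
      _ = E * E * ‖y‖ * Real.sqrt (t^2/j + t^2/i) := by
          rw [show (0:ℝ)^2 + t^2/j + t^2/i = t^2/j + t^2/i by ring]; ring
  -- Cauchy for shifted sequence
  set f : ℕ → X := fun k => u (k + n₀) with hf
  have hcauchy : CauchySeq f := by
    refine cauchySeq_of_le_tendsto_0 (fun N : ℕ => E * E * ‖y‖ * Real.sqrt (2 * t^2/((N:ℝ) + (n₀:ℝ)))) ?_ ?_
    · intro i j N hNi hNj
      have key : ∀ i j : ℕ, N ≤ j → j ≤ i → dist (f j) (f i)
          ≤ E * E * ‖y‖ * Real.sqrt (2 * t^2/((N:ℝ) + (n₀:ℝ))) := by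
        intro i j hNj hij
        have h1 : n₀ ≤ j + n₀ := Nat.le_add_left _ _
        have h2 : j + n₀ ≤ i + n₀ := by omega
        have := hsym (i + n₀) (j + n₀) h1 h2
        rw [hf, dist_eq_norm]
        refine this.trans ?_
        have hNn : (0:ℝ) < (N:ℝ) + (n₀:ℝ) := by
          have h0 : (0:ℝ) < (n₀:ℝ) := by rw [hn₀]; exact_mod_cast Nat.succ_pos (⌈2 * |ω| * t⌉₊)
          positivity
        refine mul_le_mul_of_nonneg_left ?_ (by positivity)
        apply Real.sqrt_le_sqrt
        have hb1 : t^2/(j + n₀ : ℕ) ≤ t^2/((N:ℝ) + n₀) := by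
          apply div_le_div_of_nonneg_left (by positivity) hNn
          push_cast; linarith [(Nat.cast_le (α := ℝ)).2 hNj]
        have hb2 : t^2/(i + n₀ : ℕ) ≤ t^2/((N:ℝ) + n₀) := by
          apply div_le_div_of_nonneg_left (by positivity) hNn
          push_cast
          have : (N:ℝ) ≤ i := by exact_mod_cast le_trans hNj hij
          linarith
        push_cast at hb1 hb2 ⊢
        calc t^2/((j:ℝ) + n₀) + t^2/((i:ℝ) + n₀) ≤ t^2/((N:ℝ)+n₀) + t^2/((N:ℝ)+n₀) := by
              exact add_le_add hb1 hb2
          _ = 2*t^2/((N:ℝ)+n₀) := by ring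
      rcases le_total i j with h | h
      · simpa using key j i hNi h
      · rw [dist_comm]; simpa using key i j hNj h
    · have hdiv : Tendsto (fun N : ℕ => 2 * t^2/((N:ℝ) + (n₀:ℝ))) atTop (𝓝 0) := by
        apply Tendsto.div_atTop (tendsto_const_nhds)
        exact Filter.tendsto_atTop_add_const_right _ _ tendsto_natCast_atTop_atTop
      have hsq : Tendsto (fun N : ℕ => Real.sqrt (2 * t^2/((N:ℝ) + (n₀:ℝ)))) atTop (𝓝 0) := by
        have := (Real.continuous_sqrt.tendsto 0).comp hdiv
        simpa [Function.comp_def] using this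
      have := hsq.const_mul (E * E * ‖y‖)
      simpa using this
  obtain ⟨L, hL⟩ := cauchySeq_tendsto_of_complete hcauchy
  exact ⟨L, (tendsto_add_atTop_iff_nat n₀).1 hL⟩
end CL5

section CL6
open Topology
variable {X : Type*} [NormedAddCommGroup X] [NormedSpace ℝ X] [CompleteSpace X]
variable {ω : ℝ} {A : Set (X × X)}
variable (hc : ∀ α : ℝ, 0 < α → α * ω < 1 → ∀ p ∈ A, ∀ q ∈ A,
      ‖p.1 - q.1‖ ≤ (1 - α*ω)⁻¹ * ‖(p.1 - α • p.2) - (q.1 - α • q.2)‖)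
variable (hs2 : ∀ α : ℝ, 0 < α → α * ω < 1 → ∀ w : X, ∃ p ∈ A, p.1 - α • p.2 = w)
variable (hdense : Dense {x : X | ∃ y, (x, y) ∈ A})

omit [CompleteSpace X] in
include hc hs2 in
lemma iter_lip_exp {t : ℝ} (ht : 0 < t) {k : ℕ} (hk : (⌈2 * |ω| * t⌉₊ + 1 : ℕ) ≤ k)
    (w w' : X) :
    ‖(clRes A (t/k))^[k] w - (clRes A (t/k))^[k] w'‖ ≤ Real.exp (2 * |ω| * t) * ‖w - w'‖ := by
  obtain ⟨hp, hω1, ha, hn⟩ := tn_facts (ω := ω) ht hk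
  have h1 := res_iter_lip hc hs2 hp hω1 w w' k
  refine h1.trans ?_
  refine mul_le_mul_of_nonneg_right ?_ (norm_nonneg _)
  have h2 : ((1 - (t/k)*ω)⁻¹)^k ≤ (max (1 - (t/k)*ω)⁻¹ 1)^k := by
    apply pow_le_pow_left₀ ?_ (le_max_left _ _)
    have : (0:ℝ) < 1 - (t/k)*ω := by linarith
    positivity
  refine h2.trans ?_
  have h3 := Gpow (ω := ω) hp.le ha k
  have hkk : (k:ℝ) * (t/k) = t := by field_simp
  rwa [hkk] at h3

include hc hs2 hdense in
lemma conv_all {t : ℝ} (ht : 0 ≤ t) (x : X) :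
    ∃ L, Tendsto (fun n : ℕ => (clRes A (t/n))^[n] x) atTop (𝓝 L) := by
  rcases eq_or_lt_of_le ht with rfl | ht
  · exact ⟨x, by simp only [seq_const_zero]; exact tendsto_const_nhds⟩
  set u : ℕ → X := fun n => (clRes A (t/n))^[n] x with hu
  suffices h : CauchySeq u by exact cauchySeq_tendsto_of_complete h
  rw [Metric.cauchySeq_iff]
  intro ε hε
  set C : ℝ := Real.exp (2 * |ω| * t) with hC
  have hC0 : 0 < C := Real.exp_pos _
  have hr : 0 < ε/(3*(C+1)) := by positivity
  obtain ⟨z, hzball, yz, hyz⟩ := Metric.dense_iff.1 hdense x _ hr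
  have hxz : ‖x - z‖ < ε/(3*(C+1)) := by
    rw [← dist_eq_norm, dist_comm]; exact Metric.mem_ball.1 hzball
  obtain ⟨L, hL⟩ := conv_mem hc hs2 hyz ht.le
  obtain ⟨N₁, hN₁⟩ := Metric.cauchySeq_iff.1 hL.cauchySeq (ε/3) (by positivity)
  refine ⟨max (⌈2 * |ω| * t⌉₊ + 1) N₁, fun m hm n hn => ?_⟩
  have hm1 : (⌈2 * |ω| * t⌉₊ + 1 : ℕ) ≤ m := le_trans (le_max_left _ _) hm
  have hn1 : (⌈2 * |ω| * t⌉₊ + 1 : ℕ) ≤ n := le_trans (le_max_left _ _) hn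
  have hmz := iter_lip_exp hc hs2 ht hm1 x z
  have hnz := iter_lip_exp hc hs2 ht hn1 x z
  have hmid := hN₁ m (le_trans (le_max_right _ _) hm) n (le_trans (le_max_right _ _) hn)
  have hLip : C * ‖x - z‖ ≤ ε/3 := by
    calc C * ‖x - z‖ ≤ C * (ε/(3*(C+1))) := by
          exact mul_le_mul_of_nonneg_left hxz.le hC0.le
      _ ≤ (C+1) * (ε/(3*(C+1))) := by
          refine mul_le_mul_of_nonneg_right (by linarith) (by positivity)
      _ = ε/3 := by field_simp
  calc dist (u m) (u n) ≤ dist (u m) ((clRes A (t/m))^[m] z)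
        + dist ((clRes A (t/m))^[m] z) ((clRes A (t/n))^[n] z)
        + dist ((clRes A (t/n))^[n] z) (u n) := dist_triangle4 _ _ _ _
    _ < ε/3 + ε/3 + ε/3 := by
        have hA : dist (u m) ((clRes A (t/m))^[m] z) ≤ ε/3 := by
          rw [dist_eq_norm]; exact le_trans hmz hLip
        have hB : dist ((clRes A (t/n))^[n] z) (u n) ≤ ε/3 := by
          rw [dist_eq_norm, norm_sub_rev]; exact le_trans hnz hLip
        linarith [hmid]
    _ = ε := by ring

open Classical in
noncomputable def clT (A : Set (X × X)) (t : ℝ) (x : X) : X :=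
  limUnder atTop (fun n : ℕ => (clRes A (t/n))^[n] x)

include hc hs2 hdense in
lemma clT_tendsto {t : ℝ} (ht : 0 ≤ t) (x : X) :
    Tendsto (fun n : ℕ => (clRes A (t/n))^[n] x) atTop (𝓝 (clT A t x)) :=
  tendsto_nhds_limUnder (conv_all hc hs2 hdense ht x)

include hc hs2 hdense in
lemma clT_zero (x : X) : clT A 0 x = x := by
  have h1 := clT_tendsto hc hs2 hdense le_rfl x
  have h2 : Tendsto (fun n : ℕ => (clRes A ((0:ℝ)/n))^[n] x) atTop (𝓝 x) := by
    simp only [seq_const_zero]; exact tendsto_const_nhds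
  exact tendsto_nhds_unique h1 h2

include hc hs2 hdense in
lemma clT_lip {t : ℝ} (ht : 0 ≤ t) (x x' : X) :
    ‖clT A t x - clT A t x'‖ ≤ Real.exp (ω*t) * ‖x - x'‖ := by
  rcases eq_or_lt_of_le ht with rfl | ht
  · rw [clT_zero hc hs2 hdense, clT_zero hc hs2 hdense]
    simp
  have h1 : Tendsto (fun n : ℕ => ‖(clRes A (t/n))^[n] x - (clRes A (t/n))^[n] x'‖)
      atTop (𝓝 ‖clT A t x - clT A t x'‖) :=
    ((clT_tendsto hc hs2 hdense ht.le x).sub (clT_tendsto hc hs2 hdense ht.le x')).norm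
  have hbase : Tendsto (fun n : ℕ => ((1 - (t/n)*ω)⁻¹)^n) atTop (𝓝 (Real.exp (ω*t))) := by
    have h0 : Tendsto (fun n : ℕ => (1 + (-(t*ω))/n)^n) atTop (𝓝 (Real.exp (-(t*ω)))) :=
      Real.tendsto_one_add_div_pow_exp (-(t*ω))
    have heq : ∀ n : ℕ, ((1 - (t/n)*ω))^n = (1 + (-(t*ω))/n)^n := by
      intro n; congr 1; ring
    have h0' : Tendsto (fun n : ℕ => ((1 - (t/n)*ω))^n) atTop (𝓝 (Real.exp (-(t*ω)))) := by
      simp only [heq]; exact h0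
    have h2 := h0'.inv₀ (Real.exp_ne_zero _)
    simp only [← inv_pow] at h2
    rw [← Real.exp_neg, neg_neg] at h2
    rw [show ω*t = t*ω by ring]
    exact h2
  have h2 : Tendsto (fun n : ℕ => ((1 - (t/n)*ω)⁻¹)^n * ‖x - x'‖)
      atTop (𝓝 (Real.exp (ω*t) * ‖x - x'‖)) := hbase.mul_const _
  refine le_of_tendsto_of_tendsto h1 h2 ?_
  filter_upwards [Filter.eventually_ge_atTop (⌈2 * |ω| * t⌉₊ + 1)] with n hn
  obtain ⟨hp, hω1, _, _⟩ := tn_facts (ω := ω) ht hn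
  exact res_iter_lip hc hs2 hp hω1 x x' n

include hc hs2 hdense in
lemma clT_move {t : ℝ} (ht : 0 ≤ t) {x y : X} (hxy : (x, y) ∈ A) :
    ‖clT A t x - x‖ ≤ t * Real.exp (2 * |ω| * t) * ‖y‖ := by
  rcases eq_or_lt_of_le ht with rfl | ht
  · rw [clT_zero hc hs2 hdense]; simp
  have h1 : Tendsto (fun n : ℕ => ‖(clRes A (t/n))^[n] x - x‖)
      atTop (𝓝 ‖clT A t x - x‖) :=
    ((clT_tendsto hc hs2 hdense ht.le x).sub tendsto_const_nhds).norm
  refine le_of_tendsto h1 ?_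
  filter_upwards [Filter.eventually_ge_atTop (⌈2 * |ω| * t⌉₊ + 1)] with n hn
  obtain ⟨hp, hω1, ha, hne⟩ := tn_facts (ω := ω) ht hn
  have h2 := res_iter_move hc hs2 hp hω1 hxy n
  refine h2.trans ?_
  have hkk : (n:ℝ) * (t/n) = t := by field_simp
  have h3 := Gpow (ω := ω) hp.le ha n
  rw [hkk] at h3
  calc (n:ℝ) * (t/n) * (max (1 - (t/n)*ω)⁻¹ 1)^n * ‖y‖
      = t * (max (1 - (t/n)*ω)⁻¹ 1)^n * ‖y‖ := by rw [hkk]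
    _ ≤ t * Real.exp (2 * |ω| * t) * ‖y‖ := by
        refine mul_le_mul_of_nonneg_right ?_ (norm_nonneg _)
        exact mul_le_mul_of_nonneg_left h3 ht.le
end CL6

section CL7
open Topology
variable {X : Type*} [NormedAddCommGroup X] [NormedSpace ℝ X] [CompleteSpace X]
variable {ω : ℝ} {A : Set (X × X)}
variable (hc : ∀ α : ℝ, 0 < α → α * ω < 1 → ∀ p ∈ A, ∀ q ∈ A,
      ‖p.1 - q.1‖ ≤ (1 - α*ω)⁻¹ * ‖(p.1 - α • p.2) - (q.1 - α • q.2)‖)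
variable (hs2 : ∀ α : ℝ, 0 < α → α * ω < 1 → ∀ w : X, ∃ p ∈ A, p.1 - α • p.2 = w)
variable (hdense : Dense {x : X | ∃ y, (x, y) ∈ A})

lemma small_lw {lam : ℝ} (hlp : 0 < lam) (hsm : |ω| * lam ≤ 1/2) : lam * ω < 1 := by
  have h1 : lam * ω ≤ lam * |ω| := mul_le_mul_of_nonneg_left (le_abs_self ω) hlp.le
  have h2 : lam * |ω| = |ω| * lam := mul_comm _ _
  linarith

omit [CompleteSpace X] in
include hc hs2 in
lemma iter_lip_gen {lam : ℝ} (hlp : 0 < lam) (hsm : |ω| * lam ≤ 1/2) (m : ℕ) (w w' : X) :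
    ‖(clRes A lam)^[m] w - (clRes A lam)^[m] w'‖
      ≤ Real.exp (2 * |ω| * ((m:ℝ) * lam)) * ‖w - w'‖ := by
  have hlw := small_lw (ω := ω) hlp hsm
  have h1 := res_iter_lip hc hs2 hlp hlw w w' m
  refine h1.trans (mul_le_mul_of_nonneg_right ?_ (norm_nonneg _))
  have h2 : ((1 - lam*ω)⁻¹)^m ≤ (max (1 - lam*ω)⁻¹ 1)^m := by
    apply pow_le_pow_left₀ ?_ (le_max_left _ _)
    have : (0:ℝ) < 1 - lam*ω := by linarith
    positivity
  exact h2.trans (Gpow (ω := ω) hlp.le hsm m)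

include hc hs2 hdense in
lemma estE {t : ℝ} (ht : 0 ≤ t) {x y : X} (hxy : (x, y) ∈ A)
    {lam : ℝ} (hlp : 0 < lam) (hsm : |ω| * lam ≤ 1/2) (m : ℕ) :
    ‖(clRes A lam)^[m] x - clT A t x‖
      ≤ Real.exp (2 * |ω| * ((m:ℝ)*lam + t)) * ‖y‖
        * Real.sqrt (((m:ℝ)*lam - t)^2 + m*lam^2) := by
  have hlw := small_lw (ω := ω) hlp hsm
  have hml0 : (0:ℝ) ≤ (m:ℝ)*lam := by positivity
  rcases eq_or_lt_of_le ht with rfl | ht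
  · rw [clT_zero hc hs2 hdense]
    have h1 := res_iter_move hc hs2 hlp hlw hxy m
    refine h1.trans ?_
    have h2 := Gpow (ω := ω) hlp.le hsm m
    have h3 : (m:ℝ)*lam ≤ Real.sqrt (((m:ℝ)*lam - 0)^2 + m*lam^2) := by
      rw [show ((m:ℝ)*lam - 0)^2 = ((m:ℝ)*lam)^2 by ring]
      calc (m:ℝ)*lam = Real.sqrt (((m:ℝ)*lam)^2) := (Real.sqrt_sq hml0).symm
        _ ≤ _ := Real.sqrt_le_sqrt (le_add_of_nonneg_right (by positivity))
    calc (m:ℝ) * lam * (max (1 - lam*ω)⁻¹ 1)^m * ‖y‖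
        ≤ Real.sqrt (((m:ℝ)*lam - 0)^2 + m*lam^2) * Real.exp (2 * |ω| * ((m:ℝ)*lam + 0)) * ‖y‖ := by
          refine mul_le_mul_of_nonneg_right ?_ (norm_nonneg _)
          refine mul_le_mul h3 (h2.trans (le_of_eq (by rw [add_zero]))) (by positivity) (Real.sqrt_nonneg _)
      _ = Real.exp (2 * |ω| * ((m:ℝ)*lam + 0)) * ‖y‖ * Real.sqrt (((m:ℝ)*lam - 0)^2 + m*lam^2) := by
          ring
  · -- t > 0
    have h1 : Tendsto (fun n : ℕ => ‖(clRes A lam)^[m] x - (clRes A (t/n))^[n] x‖)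
        atTop (𝓝 ‖(clRes A lam)^[m] x - clT A t x‖) :=
      (tendsto_const_nhds.sub (clT_tendsto hc hs2 hdense ht.le x)).norm
    have h2 : Tendsto (fun n : ℕ =>
        Real.exp (2 * |ω| * ((m:ℝ)*lam)) * Real.exp (2 * |ω| * t)
          * (‖y‖ * Real.sqrt (((m:ℝ)*lam - t)^2 + m*lam^2 + t^2/n)))
        atTop (𝓝 (Real.exp (2 * |ω| * ((m:ℝ)*lam)) * Real.exp (2 * |ω| * t)
          * (‖y‖ * Real.sqrt (((m:ℝ)*lam - t)^2 + m*lam^2 + 0)))) := by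
      refine Tendsto.const_mul _ (Tendsto.const_mul _ ?_)
      refine ((Real.continuous_sqrt.tendsto _).comp ?_)
      refine Tendsto.const_add _ ?_
      exact Tendsto.div_atTop tendsto_const_nhds tendsto_natCast_atTop_atTop
    have hev : ∀ᶠ n : ℕ in atTop,
        ‖(clRes A lam)^[m] x - (clRes A (t/n))^[n] x‖
          ≤ Real.exp (2 * |ω| * ((m:ℝ)*lam)) * Real.exp (2 * |ω| * t)
            * (‖y‖ * Real.sqrt (((m:ℝ)*lam - t)^2 + m*lam^2 + t^2/n)) := by
      filter_upwards [Filter.eventually_ge_atTop (⌈2 * |ω| * t⌉₊ + 1),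
        Filter.eventually_ge_atTop (⌈t/lam⌉₊ + 1)] with n hn1 hn2
      obtain ⟨hp, hw1, hsa, hne⟩ := tn_facts (ω := ω) ht hn1
      have hnR : (0:ℝ) < n := by
        rcases Nat.eq_zero_or_pos n with h | h
        · exfalso; omega
        · exact_mod_cast h
      have hml : t/n ≤ lam := by
        have h3 : t/lam ≤ (n:ℝ) := by
          calc t/lam ≤ (⌈t/lam⌉₊ : ℝ) := Nat.le_ceil _
            _ ≤ ((⌈t/lam⌉₊ + 1 : ℕ) : ℝ) := by push_cast; linarith
            _ ≤ n := by exact_mod_cast hn2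
        rw [div_le_iff₀ hnR]
        rw [div_le_iff₀ hlp] at h3
        nlinarith
      have hmas := master hc hs2 hxy hp hml hlw m n
      have hnn : (n:ℝ) * (t/n) = t := by field_simp
      have hnn2 : (n:ℝ) * (t/n)^2 = t^2/n := by field_simp
      rw [hnn, hnn2] at hmas
      refine hmas.trans ?_
      have hG1 := Gpow (ω := ω) hlp.le hsm m
      have hG2 : (max (1 - (t/n)*ω)⁻¹ 1)^n ≤ Real.exp (2 * |ω| * t) := by
        have := Gpow (ω := ω) hp.le hsa n
        rwa [hnn] at this
      have hbnn : (0:ℝ) ≤ ‖y‖ * Real.sqrt (((m:ℝ)*lam - t)^2 + m*lam^2 + t^2/n) := by positivity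
      refine mul_le_mul (mul_le_mul hG1 hG2 (by positivity) (Real.exp_pos _).le) le_rfl hbnn ?_
      positivity
    have := le_of_tendsto_of_tendsto h1 h2 hev
    refine this.trans (le_of_eq ?_)
    rw [add_zero, ← Real.exp_add]
    ring_nf

include hc hs2 hdense in
lemma conv_gen {t : ℝ} (ht : 0 ≤ t) (x : X) (lam : ℕ → ℝ) (m : ℕ → ℕ)
    (hpos : ∀ᶠ k in atTop, 0 < lam k) (hl0 : Tendsto lam atTop (𝓝 0))
    (hml : Tendsto (fun k => (m k : ℝ) * lam k) atTop (𝓝 t)) :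
    Tendsto (fun k => (clRes A (lam k))^[m k] x) atTop (𝓝 (clT A t x)) := by
  have hsmall : ∀ᶠ k in atTop, |ω| * lam k ≤ 1/2 := by
    have hcpos : (0:ℝ) < (1/2)/(|ω|+1) := by positivity
    filter_upwards [hl0.eventually (gt_mem_nhds hcpos), hpos] with k hk hkp
    have h1 : |ω| * lam k ≤ |ω| * ((1/2)/(|ω|+1)) :=
      mul_le_mul_of_nonneg_left hk.le (abs_nonneg ω)
    have h2 : |ω| * ((1/2)/(|ω|+1)) ≤ 1/2 := by
      rw [mul_comm, div_mul_eq_mul_div, div_le_iff₀ (show (0:ℝ) < |ω|+1 by positivity)]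
      nlinarith [abs_nonneg ω]
    linarith
  -- Step 1: x in the domain
  have main : ∀ z yz : X, (z, yz) ∈ A →
      Tendsto (fun k => (clRes A (lam k))^[m k] z) atTop (𝓝 (clT A t z)) := by
    intro z yz hz
    rw [tendsto_iff_norm_sub_tendsto_zero]
    apply squeeze_zero_norm' (a := fun k =>
      Real.exp (2 * |ω| * ((m k : ℝ)*lam k + t)) * ‖yz‖
        * Real.sqrt (((m k : ℝ)*lam k - t)^2 + ((m k : ℝ)*lam k)*lam k))
    · filter_upwards [hpos, hsmall] with k hkp hks
      have := estE hc hs2 hdense ht hz hkp hks (m k)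
      rw [norm_norm]
      refine this.trans (le_of_eq ?_)
      congr 2
      push_cast
      ring
    · have hin : Tendsto (fun k => ((m k : ℝ)*lam k - t)^2 + ((m k : ℝ)*lam k)*lam k)
          atTop (𝓝 0) := by
        have h1 : Tendsto (fun k => ((m k : ℝ)*lam k - t)^2) atTop (𝓝 0) := by
          have := (hml.sub_const t).pow 2
          simpa using this
        have h2 : Tendsto (fun k => ((m k : ℝ)*lam k)*lam k) atTop (𝓝 0) := by
          have := hml.mul hl0
          simpa using this
        simpa using h1.add h2
      have hsq : Tendsto (fun k => Real.sqrt (((m k : ℝ)*lam k - t)^2 + ((m k : ℝ)*lam k)*lam k))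
          atTop (𝓝 0) := by
        have := (Real.continuous_sqrt.tendsto 0).comp hin
        simpa [Function.comp_def] using this
      have hexp : Tendsto (fun k => Real.exp (2 * |ω| * ((m k : ℝ)*lam k + t)))
          atTop (𝓝 (Real.exp (2 * |ω| * (t + t)))) := by
        refine (Real.continuous_exp.tendsto _).comp ?_
        exact (Tendsto.const_mul _ (hml.add_const t))
      have := (hexp.mul_const ‖yz‖).mul hsq
      simpa using this
  -- Step 2: general x by density
  rw [Metric.tendsto_atTop]
  intro ε hε
  set C : ℝ := Real.exp (2 * |ω| * (t+1)) with hC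
  have hC0 : 0 < C := Real.exp_pos _
  have hr : 0 < ε/(3*(C+1)) := by positivity
  obtain ⟨z, hzball, yz, hyz⟩ := Metric.dense_iff.1 hdense x _ hr
  have hxz : ‖x - z‖ < ε/(3*(C+1)) := by
    rw [← dist_eq_norm, dist_comm]; exact Metric.mem_ball.1 hzball
  have hLipC : C * ‖x - z‖ ≤ ε/3 := by
    calc C * ‖x - z‖ ≤ C * (ε/(3*(C+1))) := mul_le_mul_of_nonneg_left hxz.le hC0.le
      _ ≤ (C+1) * (ε/(3*(C+1))) := mul_le_mul_of_nonneg_right (by linarith) (by positivity)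
      _ = ε/3 := by field_simp
  have hzconv := main z yz hyz
  have hev1 : ∀ᶠ k in atTop, dist ((clRes A (lam k))^[m k] z) (clT A t z) < ε/3 := by
    obtain ⟨N, hN⟩ := Metric.tendsto_atTop.1 hzconv (ε/3) (by positivity)
    exact Filter.eventually_atTop.2 ⟨N, hN⟩
  have hev2 : ∀ᶠ k in atTop, (m k : ℝ) * lam k ≤ t + 1 := by
    have : ∀ᶠ k in atTop, (m k : ℝ) * lam k < t + 1 :=
      hml.eventually (gt_mem_nhds (show t < t + 1 by linarith))
    filter_upwards [this] with k hk using hk.le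
  have hfinal : ∀ᶠ k in atTop,
      dist ((clRes A (lam k))^[m k] x) (clT A t x) < ε := by
    filter_upwards [hpos, hsmall, hev1, hev2] with k hkp hks h1 h2
    have hlip := iter_lip_gen hc hs2 hkp hks (m k) x z
    have hlipT := clT_lip hc hs2 hdense ht z x
    have hexp1 : Real.exp (2 * |ω| * ((m k : ℝ) * lam k)) ≤ C := by
      rw [hC]
      apply Real.exp_le_exp.2
      have h3 : (0:ℝ) ≤ 2 * |ω| := by positivity
      nlinarith [abs_nonneg ω]
    have hexp2 : Real.exp (ω * t) ≤ C := by
      rw [hC]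
      apply Real.exp_le_exp.2
      have h3 : ω * t ≤ |ω| * t := mul_le_mul_of_nonneg_right (le_abs_self ω) ht
      nlinarith [abs_nonneg ω]
    calc dist ((clRes A (lam k))^[m k] x) (clT A t x)
        ≤ dist ((clRes A (lam k))^[m k] x) ((clRes A (lam k))^[m k] z)
          + dist ((clRes A (lam k))^[m k] z) (clT A t z)
          + dist (clT A t z) (clT A t x) := dist_triangle4 _ _ _ _
      _ < ε/3 + ε/3 + ε/3 := by
          have hA : dist ((clRes A (lam k))^[m k] x) ((clRes A (lam k))^[m k] z) ≤ ε/3 := by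
            rw [dist_eq_norm]
            refine hlip.trans ?_
            calc Real.exp (2 * |ω| * ((m k : ℝ) * lam k)) * ‖x - z‖ ≤ C * ‖x - z‖ :=
                  mul_le_mul_of_nonneg_right hexp1 (norm_nonneg _)
              _ ≤ ε/3 := hLipC
          have hB : dist (clT A t z) (clT A t x) ≤ ε/3 := by
            rw [dist_eq_norm]
            refine hlipT.trans ?_
            calc Real.exp (ω*t) * ‖z - x‖ ≤ C * ‖z - x‖ :=
                  mul_le_mul_of_nonneg_right hexp2 (norm_nonneg _)
              _ = C * ‖x - z‖ := by rw [norm_sub_rev]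
              _ ≤ ε/3 := hLipC
          linarith
      _ = ε := by ring
  obtain ⟨N, hN⟩ := (Filter.eventually_atTop).1 hfinal
  exact ⟨N, fun k hk => hN k hk⟩
end CL7

section CL8
open Topology
variable {X : Type*} [NormedAddCommGroup X] [NormedSpace ℝ X] [CompleteSpace X]
variable {ω : ℝ} {A : Set (X × X)}
variable (hc : ∀ α : ℝ, 0 < α → α * ω < 1 → ∀ p ∈ A, ∀ q ∈ A,
      ‖p.1 - q.1‖ ≤ (1 - α*ω)⁻¹ * ‖(p.1 - α • p.2) - (q.1 - α • q.2)‖)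
variable (hs2 : ∀ α : ℝ, 0 < α → α * ω < 1 → ∀ w : X, ∃ p ∈ A, p.1 - α • p.2 = w)
variable (hdense : Dense {x : X | ∃ y, (x, y) ∈ A})

lemma ev_small {lam : ℕ → ℝ} (hl0 : Tendsto lam atTop (𝓝 0)) :
    ∀ᶠ k in atTop, |ω| * lam k ≤ 1/2 := by
  have hcpos : (0:ℝ) < (1/2)/(|ω|+1) := by positivity
  filter_upwards [hl0.eventually (gt_mem_nhds hcpos)] with k hk
  have h1 : |ω| * lam k ≤ |ω| * ((1/2)/(|ω|+1)) := by
    rcases le_or_gt (lam k) ((1/2)/(|ω|+1)) with h | h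
    · exact mul_le_mul_of_nonneg_left hk.le (abs_nonneg ω)
    · linarith [hk]
  have h2 : |ω| * ((1/2)/(|ω|+1)) ≤ 1/2 := by
    rw [mul_comm, div_mul_eq_mul_div, div_le_iff₀ (show (0:ℝ) < |ω|+1 by positivity)]
    nlinarith [abs_nonneg ω]
  linarith

include hc hs2 hdense in
lemma clT_semigroup {t s : ℝ} (ht : 0 ≤ t) (hs : 0 ≤ s) (x : X) :
    clT A t (clT A s x) = clT A (t+s) x := by
  rcases eq_or_lt_of_le (by linarith : (0:ℝ) ≤ t + s) with h0 | hts
  · have ht0 : t = 0 := by linarith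
    have hs0 : s = 0 := by linarith
    rw [ht0, hs0, clT_zero hc hs2 hdense, clT_zero hc hs2 hdense]
    norm_num
    exact (clT_zero hc hs2 hdense x).symm
  set lam : ℕ → ℝ := fun n => (t+s)/n with hlam
  set p : ℕ → ℕ := fun n => ⌊((n:ℝ) * s)/(t+s)⌋₊ with hp
  set q : ℕ → ℕ := fun n => n - p n with hq
  have hple : ∀ n : ℕ, p n ≤ n := by
    intro n
    have h1 : ((n:ℝ) * s)/(t+s) ≤ (n:ℝ) := by
      rw [div_le_iff₀ hts]
      nlinarith [Nat.cast_nonneg (α := ℝ) n]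
    calc p n = ⌊((n:ℝ) * s)/(t+s)⌋₊ := rfl
      _ ≤ ⌊(n:ℝ)⌋₊ := Nat.floor_mono h1
      _ = n := Nat.floor_natCast n
  have hlampos : ∀ᶠ n : ℕ in atTop, 0 < lam n := by
    filter_upwards [Filter.eventually_ge_atTop 1] with n hn
    have : (0:ℝ) < n := by exact_mod_cast hn
    exact div_pos hts this
  have hlam0 : Tendsto lam atTop (𝓝 0) :=
    Tendsto.div_atTop tendsto_const_nhds tendsto_natCast_atTop_atTop
  have hps : Tendsto (fun n => (p n : ℝ) * lam n) atTop (𝓝 s) := by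
    have hlow : Tendsto (fun n : ℕ => s - (t+s)/n) atTop (𝓝 s) := by
      have h0 : Tendsto (fun n : ℕ => s - (t+s)/n) atTop (𝓝 (s - 0)) :=
        Tendsto.sub tendsto_const_nhds hlam0
      simpa using h0
    refine tendsto_of_tendsto_of_tendsto_of_le_of_le' hlow tendsto_const_nhds ?_ ?_
    · filter_upwards [Filter.eventually_ge_atTop 1] with n hn
      have hnR : (0:ℝ) < n := by exact_mod_cast hn
      have hc0 : (0:ℝ) < (t+s)/n := div_pos hts hnR
      have hfl : ((n:ℝ) * s)/(t+s) - 1 ≤ (p n : ℝ) := (Nat.sub_one_lt_floor _).le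
      have key : (((n:ℝ) * s)/(t+s) - 1) * ((t+s)/n) = s - (t+s)/n := by
        field_simp
      calc s - (t+s)/n = (((n:ℝ) * s)/(t+s) - 1) * ((t+s)/n) := key.symm
        _ ≤ (p n : ℝ) * ((t+s)/n) := mul_le_mul_of_nonneg_right hfl hc0.le
    · filter_upwards [Filter.eventually_ge_atTop 1] with n hn
      have hnR : (0:ℝ) < n := by exact_mod_cast hn
      have hnn : (0:ℝ) ≤ ((n:ℝ) * s)/(t+s) := by positivity
      have hfl : (p n : ℝ) ≤ ((n:ℝ) * s)/(t+s) := Nat.floor_le hnn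
      have key : (((n:ℝ) * s)/(t+s)) * ((t+s)/n) = s := by field_simp
      calc (p n : ℝ) * lam n ≤ (((n:ℝ) * s)/(t+s)) * ((t+s)/n) :=
            mul_le_mul_of_nonneg_right hfl (by positivity)
        _ = s := key
  have hqs : Tendsto (fun n => (q n : ℝ) * lam n) atTop (𝓝 t) := by
    have heq : (fun n : ℕ => (q n : ℝ) * lam n) =ᶠ[atTop]
        (fun n : ℕ => (t+s) - (p n : ℝ) * lam n) := by
      filter_upwards [Filter.eventually_ge_atTop 1] with n hn
      have hnR : (0:ℝ) < n := by exact_mod_cast hn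
      have hcast : (q n : ℝ) = (n:ℝ) - (p n : ℝ) := by
        rw [hq]; push_cast [Nat.cast_sub (hple n)]; ring
      rw [hcast, hlam]
      field_simp
    have h2 : Tendsto (fun n : ℕ => (t+s) - (p n : ℝ) * lam n) atTop (𝓝 t) := by
      have h0 : Tendsto (fun n : ℕ => (t+s) - (p n : ℝ) * lam n) atTop (𝓝 ((t+s) - s)) :=
        Tendsto.sub tendsto_const_nhds hps
      simpa using h0
    exact Tendsto.congr' heq.symm h2
  -- the three convergences
  have key1 : Tendsto (fun n : ℕ => (clRes A (lam n))^[n] x) atTop (𝓝 (clT A (t+s) x)) :=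
    clT_tendsto hc hs2 hdense (by linarith) x
  have key2 : Tendsto (fun n => (clRes A (lam n))^[p n] x) atTop (𝓝 (clT A s x)) :=
    conv_gen hc hs2 hdense hs x lam p hlampos hlam0 hps
  have key4 : Tendsto (fun n => (clRes A (lam n))^[q n] (clT A s x)) atTop
      (𝓝 (clT A t (clT A s x))) :=
    conv_gen hc hs2 hdense ht (clT A s x) lam q hlampos hlam0 hqs
  have hevq : ∀ᶠ n : ℕ in atTop, (q n : ℝ) * lam n ≤ t + 1 := by
    filter_upwards [hqs.eventually (gt_mem_nhds (show t < t + 1 by linarith))] with n hn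
    exact hn.le
  have hdiff : Tendsto (fun n => (clRes A (lam n))^[q n] ((clRes A (lam n))^[p n] x)
      - (clRes A (lam n))^[q n] (clT A s x)) atTop (𝓝 0) := by
    apply squeeze_zero_norm' (a := fun n =>
      Real.exp (2 * |ω| * (t+1)) * ‖(clRes A (lam n))^[p n] x - clT A s x‖)
    · filter_upwards [hlampos, ev_small (ω := ω) hlam0, hevq] with n hnp hns hnq
      have hlip := iter_lip_gen hc hs2 hnp hns (q n) ((clRes A (lam n))^[p n] x) (clT A s x)
      refine hlip.trans ?_
      refine mul_le_mul_of_nonneg_right ?_ (norm_nonneg _)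
      apply Real.exp_le_exp.2
      have : (0:ℝ) ≤ 2 * |ω| := by positivity
      nlinarith
    · have h1 : Tendsto (fun n => ‖(clRes A (lam n))^[p n] x - clT A s x‖) atTop (𝓝 0) := by
        have h0 : Tendsto (fun n => (clRes A (lam n))^[p n] x - clT A s x) atTop
            (𝓝 (clT A s x - clT A s x)) := key2.sub tendsto_const_nhds
        rw [sub_self] at h0
        simpa using h0.norm
      have := h1.const_mul (Real.exp (2 * |ω| * (t+1)))
      simpa using this
  have hcomb : Tendsto (fun n => (clRes A (lam n))^[q n] ((clRes A (lam n))^[p n] x))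
      atTop (𝓝 (clT A t (clT A s x))) := by
    have := hdiff.add key4
    simpa using this
  have hsplit : ∀ n : ℕ, (clRes A (lam n))^[n] x
      = (clRes A (lam n))^[q n] ((clRes A (lam n))^[p n] x) := by
    intro n
    rw [← Function.iterate_add_apply]
    congr 1
    have := hple n
    simp only [hq]
    omega
  have key1' : Tendsto (fun n : ℕ => (clRes A (lam n))^[q n] ((clRes A (lam n))^[p n] x))
      atTop (𝓝 (clT A (t+s) x)) := by
    refine key1.congr (fun n => hsplit n)
  exact tendsto_nhds_unique hcomb key1'

include hc hs2 hdense in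
lemma clT_contOn (x : X) : ContinuousOn (fun t => clT A t x) (Ici (0:ℝ)) := by
  intro t₀ ht₀
  rw [mem_Ici] at ht₀
  rw [Metric.continuousWithinAt_iff]
  intro ε hε
  set C : ℝ := Real.exp (|ω| * (t₀+1)) with hCdef
  have hC0 : 0 < C := Real.exp_pos _
  have hrpos : 0 < ε/(6*(C+1)) := by positivity
  obtain ⟨z, hzball, yz, hyz⟩ := Metric.dense_iff.1 hdense x _ hrpos
  have hxz : ‖x - z‖ < ε/(6*(C+1)) := by
    rw [← dist_eq_norm, dist_comm]; exact Metric.mem_ball.1 hzball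
  set K : ℝ := C * Real.exp (2 * |ω|) * ‖yz‖ with hKdef
  have hK0 : 0 ≤ K := by positivity
  refine ⟨min 1 (ε/(3*(K+1))), by positivity, ?_⟩
  intro u hu hud
  rw [mem_Ici] at hu
  have hud1 : dist u t₀ < 1 := lt_of_lt_of_le hud (min_le_left _ _)
  have hud2 : dist u t₀ < ε/(3*(K+1)) := lt_of_lt_of_le hud (min_le_right _ _)
  -- Lipschitz factor bounds on [0, t₀+1]
  have habs1 : |u - t₀| < 1 := by rwa [Real.dist_eq] at hud1
  have habs2 : |u - t₀| < ε/(3*(K+1)) := by rwa [Real.dist_eq] at hud2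
  have habs1' := abs_lt.1 habs1
  have habs2' := abs_lt.1 habs2
  have hubound : u ≤ t₀ + 1 := by linarith [habs1'.2]
  have hlipfac : ∀ a : ℝ, 0 ≤ a → a ≤ t₀ + 1 → Real.exp (ω * a) ≤ C := by
    intro a ha1 ha2
    rw [hCdef]
    apply Real.exp_le_exp.2
    have h1 : ω * a ≤ |ω| * a := mul_le_mul_of_nonneg_right (le_abs_self ω) ha1
    have h2 : |ω| * a ≤ |ω| * (t₀+1) := mul_le_mul_of_nonneg_left ha2 (abs_nonneg ω)
    linarith
  -- generic bound for the middle term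
  have hmid : ∀ a b : ℝ, 0 ≤ a → a ≤ b → b ≤ t₀ + 1 → b - a < ε/(3*(K+1)) → b - a ≤ 1 →
      ‖clT A b z - clT A a z‖ < ε/3 := by
    intro a b ha hab hb hablt hab1
    have hd0 : 0 ≤ b - a := by linarith
    have hsg : clT A a (clT A (b-a) z) = clT A b z := by
      rw [clT_semigroup hc hs2 hdense ha hd0 z]
      congr 1
      ring
    rw [← hsg]
    have h1 : ‖clT A a (clT A (b-a) z) - clT A a z‖
        ≤ Real.exp (ω * a) * ‖clT A (b-a) z - z‖ :=
      clT_lip hc hs2 hdense ha _ _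
    have h2 : ‖clT A (b-a) z - z‖ ≤ (b-a) * Real.exp (2 * |ω| * (b-a)) * ‖yz‖ :=
      clT_move hc hs2 hdense hd0 hyz
    have h3 : Real.exp (2 * |ω| * (b-a)) ≤ Real.exp (2 * |ω|) := by
      apply Real.exp_le_exp.2
      nlinarith [abs_nonneg ω]
    have h4 : ‖clT A (b-a) z - z‖ ≤ (b-a) * Real.exp (2 * |ω|) * ‖yz‖ := by
      refine h2.trans ?_
      refine mul_le_mul_of_nonneg_right (mul_le_mul_of_nonneg_left h3 hd0) (norm_nonneg _)
    have h5 : Real.exp (ω * a) ≤ C := hlipfac a ha (by linarith)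
    calc ‖clT A a (clT A (b-a) z) - clT A a z‖
        ≤ Real.exp (ω * a) * ‖clT A (b-a) z - z‖ := h1
      _ ≤ C * ((b-a) * Real.exp (2 * |ω|) * ‖yz‖) := by
          refine mul_le_mul h5 h4 (norm_nonneg _) hC0.le
      _ = K * (b-a) := by rw [hKdef]; ring
      _ < (K+1) * (ε/(3*(K+1))) := by
          have hK1 : K * (b-a) ≤ K * (ε/(3*(K+1))) := by
            rcases eq_or_lt_of_le hd0 with h | h
            · rw [← h]; simp; positivity
            · exact mul_le_mul_of_nonneg_left hablt.le hK0
          have : K * (ε/(3*(K+1))) < (K+1) * (ε/(3*(K+1))) := by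
            refine mul_lt_mul_of_pos_right (by linarith) (by positivity)
          linarith
      _ = ε/3 := by field_simp
  -- endpoint terms
  have hend : ∀ a : ℝ, 0 ≤ a → a ≤ t₀ + 1 → ‖clT A a x - clT A a z‖ < ε/6 := by
    intro a ha hat
    have h1 := clT_lip hc hs2 hdense ha x z
    have h2 := hlipfac a ha hat
    calc ‖clT A a x - clT A a z‖ ≤ Real.exp (ω * a) * ‖x - z‖ := h1
      _ ≤ C * ‖x - z‖ := mul_le_mul_of_nonneg_right h2 (norm_nonneg _)
      _ < (C+1) * (ε/(6*(C+1))) := by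
          have s1 : C * ‖x - z‖ < C * (ε/(6*(C+1))) := mul_lt_mul_of_pos_left hxz hC0
          have s2 : C * (ε/(6*(C+1))) < (C+1) * (ε/(6*(C+1))) :=
            mul_lt_mul_of_pos_right (by linarith) (by positivity)
          linarith
      _ = ε/6 := by field_simp
  rw [dist_eq_norm]
  have tri : ‖clT A u x - clT A t₀ x‖ ≤ ‖clT A u x - clT A u z‖
      + ‖clT A u z - clT A t₀ z‖ + ‖clT A t₀ z - clT A t₀ x‖ := by
    have := norm_sub_le_norm_sub_add_norm_sub (clT A u x) (clT A u z) (clT A t₀ x)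
    calc ‖clT A u x - clT A t₀ x‖
        ≤ ‖clT A u x - clT A u z‖ + ‖clT A u z - clT A t₀ x‖ := norm_sub_le_norm_sub_add_norm_sub _ _ _
      _ ≤ ‖clT A u x - clT A u z‖ + (‖clT A u z - clT A t₀ z‖ + ‖clT A t₀ z - clT A t₀ x‖) := by
          gcongr
          exact norm_sub_le_norm_sub_add_norm_sub _ _ _
      _ = _ := by ring
  have e1 : ‖clT A u x - clT A u z‖ < ε/6 := hend u hu hubound
  have e3 : ‖clT A t₀ z - clT A t₀ x‖ < ε/6 := by
    rw [norm_sub_rev]; exact hend t₀ ht₀ (by linarith)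
  have e2 : ‖clT A u z - clT A t₀ z‖ < ε/3 := by
    rcases le_total u t₀ with h | h
    · rw [norm_sub_rev]
      exact hmid u t₀ hu h (by linarith) (by linarith [habs2'.2]) (by linarith [habs1'.2])
    · exact hmid t₀ u ht₀ h hubound (by linarith [habs2'.1]) (by linarith [habs1'.1])
  linarith
end CL8

/-- Crandall–Liggett theorem: an `ω`-m-dissipative operator on a Banach space generates a
strongly continuous semigroup of type `ω` via the exponential formula
`T(t)x = lim (I - (t/n) A)⁻ⁿ x`. -/
theorem crandall_liggett
    {X : Type*} [NormedAddCommGroup X] [NormedSpace ℝ X] [CompleteSpace X]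
    (ω : ℝ) (A : Set (X × X)) (hA : IsMDissipativeSet (opShift A ω)) :
    ∃ T : ℝ → X → X,
      (∀ x, T 0 x = x) ∧
      (∀ t, 0 ≤ t → ∀ s, 0 ≤ s → ∀ x, T t (T s x) = T (t + s) x) ∧
      (∀ t, 0 ≤ t → ∀ x y : X, ‖T t x - T t y‖ ≤ Real.exp (ω * t) * ‖x - y‖) ∧
      (∀ x, ContinuousOn (fun t => T t x) (Set.Ici (0:ℝ))) ∧
      (∀ t, 0 ≤ t → ∀ x : X, ∀ J : ℕ → X → X,
        (∀ n : ℕ, 0 < n → t * ω / n < 1 →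
          ∀ y, ∃ z, (J n y, z) ∈ A ∧ J n y - (t / n) • z = y) →
        Tendsto (fun n : ℕ => (J n)^[n] x) atTop (nhds (T t x))) := by

  obtain ⟨hd, hden, hsurj⟩ := hA
  have hc := shift_contr hd
  have hs2 := shift_surj hsurj
  have hdense : Dense {x : X | ∃ y, (x, y) ∈ A} := by
    have hsetEq : {x : X | ∃ y, (x, y) ∈ opShift A ω} = {x : X | ∃ y, (x, y) ∈ A} := by
      ext u
      constructor
      · rintro ⟨y, a, ha, heq⟩
        have h1 : u = a.1 := congrArg Prod.fst heq
        refine ⟨a.2, ?_⟩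
        rw [h1]
        simpa using ha
      · rintro ⟨y, hxy⟩
        exact ⟨y - ω • u, ⟨(u, y), hxy, rfl⟩⟩
    rw [← hsetEq]
    exact hden
  refine ⟨clT A, fun x => clT_zero hc hs2 hdense x, ?_, ?_, ?_, ?_⟩
  · intro t ht s hs x
    exact clT_semigroup hc hs2 hdense ht hs x
  · intro t ht x y
    exact clT_lip hc hs2 hdense ht x y
  · intro x
    exact clT_contOn hc hs2 hdense x
  · intro t ht x J hJ
    rcases eq_or_lt_of_le ht with rfl | ht
    · have hev : (fun n : ℕ => x) =ᶠ[atTop] (fun n : ℕ => (J n)^[n] x) := by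
        filter_upwards [Filter.eventually_ge_atTop 1] with n hn
        have h0 : (0:ℝ) * ω / n < 1 := by
          rw [zero_mul, zero_div]; norm_num
        have hfix : ∀ y, J n y = y := by
          intro y
          obtain ⟨z, hz, he⟩ := hJ n (by omega) h0 y
          rw [zero_div, zero_smul, sub_zero] at he
          exact he
        have hid : J n = id := funext (fun y => hfix y)
        rw [hid, Function.iterate_id, id_eq]
      rw [clT_zero hc hs2 hdense x]
      exact Tendsto.congr' hev tendsto_const_nhds
    · have hconv := clT_tendsto hc hs2 hdense ht.le x
      refine Tendsto.congr' ?_ hconv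
      filter_upwards [Filter.eventually_ge_atTop (⌈2 * |ω| * t⌉₊ + 1)] with n hn
      obtain ⟨hp, hw1, _, hne⟩ := tn_facts (ω := ω) ht hn
      have hn0 : 0 < n := by
        have : (1:ℕ) ≤ ⌈2 * |ω| * t⌉₊ + 1 := by omega
        omega
      have hcond : t * ω / n < 1 := by
        have he : t * ω / n = (t/n) * ω := by ring
        rw [he]; exact hw1
      have hJn : ∀ y, clRes A (t/n) y = J n y := by
        intro y
        obtain ⟨z, hz, he⟩ := hJ n hn0 hcond y
        exact res_unique hc hp hw1 hz he
      have hfun : clRes A (t/n) = J n := funext hJn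
      rw [hfun]
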